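/- Let R_1, …, R_n be pairwise disjoint closed axis-aligned rectangles in ℝ² whose bottom-left vertices (a_m,c_m) satisfy a_1 < a_2 < … < a_n and c_1 > c_2 > … > c_n, and suppose R_i and R_j (i < j) both have no incoming arrows in the dependency graph G(R). Then no rectangle R_m with m < i or m > j has a directed path in G(R) (a chain of one or more arrows) ending at any rectangle R_s with i ≤ s ≤ j. -/

import Mathlib

open Set

/-- `R j` is vertically visible from `R i`: there is a vertical closed segment with one
endpoint in `R i` and the other in `R j` that meets no third region. -/
def VertVis {n : ℕ} (R : Fin n → Set (ℝ × ℝ)) (i j : Fin n) : Prop :=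
  ∃ x y₁ y₂ : ℝ, (x, y₁) ∈ R i ∧ (x, y₂) ∈ R j ∧
    ∀ t ∈ Set.uIcc y₁ y₂, ∀ m : Fin n, m ≠ i → m ≠ j → (x, t) ∉ R m

/-- `R j` is horizontally visible from `R i`: there is a horizontal closed segment with one
endpoint in `R i` and the other in `R j` that meets no third region. -/
def HorVis {n : ℕ} (R : Fin n → Set (ℝ × ℝ)) (i j : Fin n) : Prop :=
  ∃ y x₁ x₂ : ℝ, (x₁, y) ∈ R i ∧ (x₂, y) ∈ R j ∧
    ∀ t ∈ Set.uIcc x₁ x₂, ∀ m : Fin n, m ≠ i → m ≠ j → (t, y) ∉ R m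

/-- A vertical arrow from `R i` to `R j` in the dependency graph `G(R)`. -/
def VertArrow {n : ℕ} (R : Fin n → Set (ℝ × ℝ)) (i j : Fin n) : Prop :=
  i < j ∧ VertVis R i j

/-- A horizontal arrow from `R i` to `R j` in the dependency graph `G(R)`. -/
def HorArrow {n : ℕ} (R : Fin n → Set (ℝ × ℝ)) (i j : Fin n) : Prop :=
  j < i ∧ HorVis R i j

/-- An arrow from `R i` to `R j` in the dependency graph `G(R)`. -/
def Arrow {n : ℕ} (R : Fin n → Set (ℝ × ℝ)) (i j : Fin n) : Prop :=
  VertArrow R i j ∨ HorArrow R i j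

/-- If `R i` and `R j` (`i < j`) are both sources of `G(R)` for an ordered
pairwise-disjoint family, then no region outside `[R i, R j]` has a directed path in `G(R)`
to a region inside `[R i, R j]`. -/
theorem no_path_into_subproblem {n : ℕ} (a b c d : Fin n → ℝ)
    (hab : ∀ m, a m ≤ b m) (hcd : ∀ m, c m ≤ d m)
    (R : Fin n → Set (ℝ × ℝ))
    (hR : ∀ m, R m = Icc (a m) (b m) ×ˢ Icc (c m) (d m))
    (hdisj : ∀ i j : Fin n, i ≠ j → Disjoint (R i) (R j))
    (ha : StrictMono a) (hc : StrictAnti c)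
    (i j : Fin n) (hij : i < j)
    (hsi : ∀ k, ¬ Arrow R k i) (hsj : ∀ k, ¬ Arrow R k j)
    (m s : Fin n) (hm : m < i ∨ j < m) (hsi' : i ≤ s) (hsj' : s ≤ j) :
    ¬ Relation.TransGen (Arrow R) m s := by
  have hmem : ∀ (p : Fin n) (x y : ℝ),
      (x, y) ∈ R p ↔ (a p ≤ x ∧ x ≤ b p) ∧ (c p ≤ y ∧ y ≤ d p) := by
    intro p x y
    rw [hR]
    simp only [Set.mem_prod, Set.mem_Icc]
  have hpt : ∀ p q : Fin n, p ≠ q → ∀ z : ℝ × ℝ, z ∈ R p → z ∈ R q → False :=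
    fun p q hpq z hzp hzq => Set.disjoint_left.mp (hdisj p q hpq) hzp hzq
  -- if p < q and a common vertical line meets both, then R q lies strictly below R p
  have ysep : ∀ p q : Fin n, p < q → ∀ x : ℝ,
      a p ≤ x → x ≤ b p → a q ≤ x → x ≤ b q → d q < c p := by
    intro p q hpq x h1 h2 h3 h4
    by_contra h'
    push_neg at h'
    exact hpt p q hpq.ne (x, c p)
      ((hmem p x (c p)).2 ⟨⟨h1, h2⟩, le_refl _, hcd p⟩)
      ((hmem q x (c p)).2 ⟨⟨h3, h4⟩, (hc hpq).le, h'⟩)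
  -- if p < q and a common horizontal line meets both, then R p lies strictly left of R q
  have xsep : ∀ p q : Fin n, p < q → ∀ y : ℝ,
      c p ≤ y → y ≤ d p → c q ≤ y → y ≤ d q → b p < a q := by
    intro p q hpq y h1 h2 h3 h4
    by_contra h'
    push_neg at h'
    exact hpt p q hpq.ne (a q, y)
      ((hmem p (a q) y).2 ⟨⟨(ha hpq).le, h'⟩, h1, h2⟩)
      ((hmem q (a q) y).2 ⟨⟨le_refl _, hab q⟩, h3, h4⟩)
  -- since i is a source, every earlier rectangle ends strictly left of b i
  have lemB : ∀ k, k < i → b k < b i := by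
    intro k hk
    by_contra h'
    push_neg at h'
    have hdik : d i < c k :=
      ysep k i hk (a i) (ha hk).le (le_trans (hab i) h') le_rfl (hab i)
    set T : Finset (Fin n) := Finset.univ.filter
      (fun ℓ => ℓ ≠ i ∧ a ℓ ≤ a i ∧ a i ≤ b ℓ ∧ d i < c ℓ) with hT
    have hkT : k ∈ T := by
      simp only [hT, Finset.mem_filter, Finset.mem_univ, true_and]
      exact ⟨hk.ne, (ha hk).le, le_trans (hab i) h', hdik⟩
    obtain ⟨ℓ, hℓT, hminℓ⟩ := Finset.exists_min_image T c ⟨k, hkT⟩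
    simp only [hT, Finset.mem_filter, Finset.mem_univ, true_and] at hℓT
    obtain ⟨hℓi, hℓ1, hℓ2, hℓ3⟩ := hℓT
    have hℓlt : ℓ < i := hc.lt_iff_gt.mp (lt_of_le_of_lt (hcd i) hℓ3)
    apply hsi ℓ
    refine Or.inl ⟨hℓlt, a i, c ℓ, d i, ?_, ?_, ?_⟩
    · exact (hmem ℓ (a i) (c ℓ)).2 ⟨⟨hℓ1, hℓ2⟩, le_refl _, hcd ℓ⟩
    · exact (hmem i (a i) (d i)).2 ⟨⟨le_refl _, hab i⟩, hcd i, le_refl _⟩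
    · intro t ht m' hm'ℓ hm'i hm'R
      rw [Set.uIcc_of_ge hℓ3.le] at ht
      obtain ⟨ht1, ht2⟩ := ht
      rw [hmem m'] at hm'R
      obtain ⟨⟨hx1, hx2⟩, hy1, hy2⟩ := hm'R
      by_cases hcm' : d i < c m'
      · have hm'T : m' ∈ T := by
          simp only [hT, Finset.mem_filter, Finset.mem_univ, true_and]
          exact ⟨hm'i, hx1, hx2, hcm'⟩
        have hcc : c ℓ ≤ c m' := hminℓ m' hm'T
        exact hpt m' ℓ hm'ℓ (a i, t)
          ((hmem m' _ _).2 ⟨⟨hx1, hx2⟩, hy1, hy2⟩)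
          ((hmem ℓ _ _).2 ⟨⟨hℓ1, hℓ2⟩, by linarith, by linarith [hcd ℓ]⟩)
      · push_neg at hcm'
        exact hpt m' i hm'i (a i, d i)
          ((hmem m' (a i) (d i)).2 ⟨⟨hx1, hx2⟩, hcm', le_trans ht1 hy2⟩)
          ((hmem i (a i) (d i)).2 ⟨⟨le_refl _, hab i⟩, hcd i, le_refl _⟩)
  -- since j is a source, every later rectangle ends strictly below d j
  have lemC : ∀ k, j < k → d k < d j := by
    intro k hk
    by_contra h'
    push_neg at h'
    have hbjak : b j < a k :=
      xsep j k hk (c j) le_rfl (hcd j) (hc hk).le (le_trans (hcd j) h')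
    set T : Finset (Fin n) := Finset.univ.filter
      (fun ℓ => ℓ ≠ j ∧ c ℓ ≤ c j ∧ c j ≤ d ℓ ∧ b j < a ℓ) with hT
    have hkT : k ∈ T := by
      simp only [hT, Finset.mem_filter, Finset.mem_univ, true_and]
      exact ⟨hk.ne', (hc hk).le, le_trans (hcd j) h', hbjak⟩
    obtain ⟨ℓ, hℓT, hminℓ⟩ := Finset.exists_min_image T a ⟨k, hkT⟩
    simp only [hT, Finset.mem_filter, Finset.mem_univ, true_and] at hℓT
    obtain ⟨hℓj, hℓ1, hℓ2, hℓ3⟩ := hℓT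
    have hℓgt : j < ℓ := ha.lt_iff_lt.mp (lt_of_le_of_lt (hab j) hℓ3)
    apply hsj ℓ
    refine Or.inr ⟨hℓgt, c j, a ℓ, b j, ?_, ?_, ?_⟩
    · exact (hmem ℓ (a ℓ) (c j)).2 ⟨⟨le_refl _, hab ℓ⟩, hℓ1, hℓ2⟩
    · exact (hmem j (b j) (c j)).2 ⟨⟨hab j, le_refl _⟩, le_refl _, hcd j⟩
    · intro t ht m' hm'ℓ hm'j hm'R
      rw [Set.uIcc_of_ge hℓ3.le] at ht
      obtain ⟨ht1, ht2⟩ := ht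
      rw [hmem m'] at hm'R
      obtain ⟨⟨hx1, hx2⟩, hy1, hy2⟩ := hm'R
      by_cases ham' : b j < a m'
      · have hm'T : m' ∈ T := by
          simp only [hT, Finset.mem_filter, Finset.mem_univ, true_and]
          exact ⟨hm'j, hy1, hy2, ham'⟩
        have haa : a ℓ ≤ a m' := hminℓ m' hm'T
        exact hpt m' ℓ hm'ℓ (t, c j)
          ((hmem m' _ _).2 ⟨⟨hx1, hx2⟩, hy1, hy2⟩)
          ((hmem ℓ _ _).2 ⟨⟨by linarith, by linarith [hab ℓ]⟩, hℓ1, hℓ2⟩)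
      · push_neg at ham'
        exact hpt m' j hm'j (b j, c j)
          ((hmem m' (b j) (c j)).2 ⟨⟨ham', le_trans ht1 hx2⟩, hy1, hy2⟩)
          ((hmem j (b j) (c j)).2 ⟨⟨hab j, le_refl _⟩, le_refl _, hcd j⟩)
  -- any arrow whose head lies in [i, j] has its tail in [i, j]
  have claimA : ∀ k t : Fin n, Arrow R k t → i ≤ t → t ≤ j → i ≤ k ∧ k ≤ j := by
    intro k t harr hit htj
    rcases harr with ⟨hkt, hvis⟩ | ⟨htk, hvis⟩
    · refine ⟨?_, le_of_lt (lt_of_lt_of_le hkt htj)⟩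
      by_contra h'
      push_neg at h'
      rcases eq_or_lt_of_le hit with rfl | hlt
      · exact hsi k (Or.inl ⟨hkt, hvis⟩)
      · obtain ⟨x, y₁, y₂, h1, h2, h3⟩ := hvis
        rw [hmem] at h1 h2
        have hxi1 : a i ≤ x := le_trans (ha hlt).le h2.1.1
        have hxi2 : x ≤ b i := le_trans h1.1.2 (lemB k h').le
        have hdti : d t < c i := ysep i t hlt x hxi1 hxi2 h2.1.1 h2.1.2
        have hdik : d i < c k := ysep k i h' x h1.1.1 h1.1.2 hxi1 hxi2
        refine h3 (c i) ?_ i (ne_of_gt h') (ne_of_lt hlt)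
          ((hmem i x (c i)).2 ⟨⟨hxi1, hxi2⟩, le_rfl, hcd i⟩)
        rw [Set.mem_uIcc]
        right
        exact ⟨by linarith [h2.2.2], by linarith [h1.2.1, hcd i]⟩
    · refine ⟨le_trans hit htk.le, ?_⟩
      by_contra h'
      push_neg at h'
      rcases eq_or_lt_of_le htj with rfl | hlt
      · exact hsj k (Or.inr ⟨htk, hvis⟩)
      · obtain ⟨y, x₁, x₂, h1, h2, h3⟩ := hvis
        rw [hmem] at h1 h2
        have hyj1 : c j ≤ y := le_trans (hc hlt).le h2.2.1
        have hyj2 : y ≤ d j := le_trans h1.2.2 (lemC k h').le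
        have hbtj : b t < a j := xsep t j hlt y h2.2.1 h2.2.2 hyj1 hyj2
        have hbjk : b j < a k := xsep j k h' y hyj1 hyj2 h1.2.1 h1.2.2
        refine h3 (a j) ?_ j (ne_of_lt h') (ne_of_gt hlt)
          ((hmem j (a j) y).2 ⟨⟨le_rfl, hab j⟩, hyj1, hyj2⟩)
        rw [Set.mem_uIcc]
        right
        exact ⟨by linarith [h2.1.2], by linarith [h1.1.1, hab j]⟩
  intro htg
  have key : ∀ p : Fin n, Relation.TransGen (Arrow R) p s → i ≤ p ∧ p ≤ j := by
    intro p hp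
    induction hp using Relation.TransGen.head_induction_on with
    | single h => exact claimA _ _ h hsi' hsj'
    | head h' _ IH => exact claimA _ _ h' IH.1 IH.2
  obtain ⟨h1, h2⟩ := key m htg
  rcases hm with hm' | hm'
  · exact absurd h1 (not_le.mpr hm')
  · exact absurd h2 (not_le.mpr hm')
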